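/- An integral domain D is a ∗-Prüfer domain if and only if (F(A^∗ ∩ B^∗))^∗ = (FA)^∗ ∩ (FB)^∗ for every nonzero finitely generated fractional ideal F and all nonzero fractional ideals A, B of D. -/

import Mathlib

set_option linter.unusedSectionVars false
set_option linter.unusedVariables false


open FractionalIdeal

/-- A star operation on an integral domain `D` with fraction field `K`, acting on
fractional ideals: it fixes `D`, is extensive, monotone, idempotent (all on nonzero
ideals), and commutes with multiplication by nonzero principal fractional ideals. -/
structure StarOp (D : Type*) [CommRing D] [IsDomain D] (K : Type*) [Field K]
    [Algebra D K] [IsFractionRing D K] where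
  star : FractionalIdeal (nonZeroDivisors D) K → FractionalIdeal (nonZeroDivisors D) K
  star_one : star 1 = 1
  le_star : ∀ {A}, A ≠ 0 → A ≤ star A
  star_mono : ∀ {A B}, A ≠ 0 → A ≤ B → star A ≤ star B
  star_idem : ∀ {A}, A ≠ 0 → star (star A) = star A
  star_smul : ∀ {A : FractionalIdeal (nonZeroDivisors D) K} (x : K), x ≠ 0 → A ≠ 0 →
    star (spanSingleton (nonZeroDivisors D) x * A) = spanSingleton (nonZeroDivisors D) x * star A

variable {D K : Type*} [CommRing D] [IsDomain D] [Field K] [Algebra D K] [IsFractionRing D K]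

section Aux

private lemma exists_ne_zero_mem {I : FractionalIdeal (nonZeroDivisors D) K} (hI : I ≠ 0) :
    ∃ x ∈ I, x ≠ (0 : K) := by
  by_contra h
  push_neg at h
  exact hI (eq_zero_iff.mpr h)

private lemma fi_mul_ne_zero {A B : FractionalIdeal (nonZeroDivisors D) K}
    (hA : A ≠ 0) (hB : B ≠ 0) : A * B ≠ 0 := by
  obtain ⟨a, haA, ha⟩ := exists_ne_zero_mem hA
  obtain ⟨b, hbB, hb⟩ := exists_ne_zero_mem hB
  intro h
  exact mul_ne_zero ha hb (eq_zero_iff.mp h _ (mul_mem_mul haA hbB))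

private lemma fi_add_ne_zero_left {A B : FractionalIdeal (nonZeroDivisors D) K}
    (hA : A ≠ 0) : A + B ≠ 0 := by
  intro h
  apply hA
  rw [eq_zero_iff]
  intro x hx
  have hle : A ≤ A + B := by rw [← sup_eq_add]; exact le_sup_left
  have : x ∈ (0 : FractionalIdeal (nonZeroDivisors D) K) := h ▸ hle hx
  exact (mem_zero_iff _).mp this

private lemma fi_inf_ne_zero {A B : FractionalIdeal (nonZeroDivisors D) K}
    (hA : A ≠ 0) (hB : B ≠ 0) : A ⊓ B ≠ 0 := by
  obtain ⟨a, haA, ha⟩ := exists_ne_zero_mem hA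
  obtain ⟨b, hbB, hb⟩ := exists_ne_zero_mem hB
  obtain ⟨r, t, ht, hrt⟩ := IsFractionRing.div_surjective (A := D) (b / a)
  have htK : algebraMap D K t ≠ 0 :=
    IsFractionRing.to_map_ne_zero_of_mem_nonZeroDivisors ht
  have key : algebraMap D K t * b = algebraMap D K r * a := by
    field_simp at hrt
    linear_combination -hrt
  have hne : algebraMap D K r * a ≠ 0 := key ▸ mul_ne_zero htK hb
  have h1 : algebraMap D K r * a ∈ A := by
    have := Submodule.smul_mem (A : Submodule D K) r haA
    rwa [Algebra.smul_def] at this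
  have h2 : algebraMap D K r * a ∈ B := by
    have := Submodule.smul_mem (B : Submodule D K) t hbB
    rw [Algebra.smul_def] at this
    rwa [key] at this
  intro h
  have hmem : algebraMap D K r * a ∈ A ⊓ B := by
    rw [← mem_coe, coe_inf, Submodule.mem_inf]
    exact ⟨mem_coe.mpr h1, mem_coe.mpr h2⟩
  exact hne (eq_zero_iff.mp h _ hmem)

private lemma fi_mul_inv_le_one {A : FractionalIdeal (nonZeroDivisors D) K} :
    A * A⁻¹ ≤ 1 := by
  rw [inv_eq]; exact mul_one_div_le_one

private lemma fi_inv_ne_zero {A : FractionalIdeal (nonZeroDivisors D) K}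
    (hA : A ≠ 0) : A⁻¹ ≠ 0 := by
  obtain ⟨a, aI, ha, hEq⟩ := exists_eq_spanSingleton_mul A
  have hmap : algebraMap D K a ≠ 0 :=
    fun h0 => ha (IsFractionRing.to_map_eq_zero_iff.mp h0)
  have hle1 : spanSingleton (nonZeroDivisors D) (algebraMap D K a) * A ≤ 1 := by
    rw [hEq, ← mul_assoc, spanSingleton_mul_spanSingleton, mul_inv_cancel₀ hmap,
      spanSingleton_one, one_mul]
    exact coeIdeal_le_one
  have hle : spanSingleton (nonZeroDivisors D) (algebraMap D K a) ≤ A⁻¹ := by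
    rw [inv_eq]
    exact (le_div_iff_mul_le hA).mpr hle1
  intro h
  rw [h] at hle
  exact hmap ((mem_zero_iff _).mp (hle (mem_spanSingleton_self _ _)))

private lemma sstar_ne_zero (s : StarOp D K) {A : FractionalIdeal (nonZeroDivisors D) K}
    (hA : A ≠ 0) : s.star A ≠ 0 := by
  obtain ⟨x, hx, hx0⟩ := exists_ne_zero_mem hA
  intro h
  exact hx0 ((mem_zero_iff _).mp (h ▸ s.le_star hA hx))

private lemma mul_star_le (s : StarOp D K) {A B : FractionalIdeal (nonZeroDivisors D) K}
    (hA : A ≠ 0) (hB : B ≠ 0) : A * s.star B ≤ s.star (A * B) := by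
  rw [mul_le]
  intro i hi j hj
  rcases eq_or_ne i 0 with rfl | hi0
  · rw [zero_mul]; exact zero_mem _
  · have h1 : spanSingleton (nonZeroDivisors D) i * B ≤ A * B :=
      mul_le_mul_left (spanSingleton_le_iff_mem.mpr hi) B
    have h2 : spanSingleton (nonZeroDivisors D) i * B ≠ 0 :=
      fi_mul_ne_zero (spanSingleton_ne_zero_iff.mpr hi0) hB
    have h3 : i * j ∈ s.star (spanSingleton (nonZeroDivisors D) i * B) := by
      rw [s.star_smul i hi0 hB]
      exact mem_singleton_mul.mpr ⟨j, hj, rfl⟩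
    exact s.star_mono h2 h1 h3

private lemma sstar_mul_star (s : StarOp D K) {A B : FractionalIdeal (nonZeroDivisors D) K}
    (hA : A ≠ 0) (hB : B ≠ 0) : s.star (A * s.star B) = s.star (A * B) := by
  apply le_antisymm
  · have h := s.star_mono (fi_mul_ne_zero hA (sstar_ne_zero s hB)) (mul_star_le s hA hB)
    rwa [s.star_idem (fi_mul_ne_zero hA hB)] at h
  · exact s.star_mono (fi_mul_ne_zero hA hB) (mul_le_mul_right (s.le_star hB) A)

private lemma sstar_star_mul (s : StarOp D K) {A B : FractionalIdeal (nonZeroDivisors D) K}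
    (hA : A ≠ 0) (hB : B ≠ 0) : s.star (s.star A * B) = s.star (A * B) := by
  rw [mul_comm (s.star A) B, sstar_mul_star s hB hA, mul_comm]

/-- Sum of two ∗-invertible fractional ideals is ∗-invertible, given distributivity. -/
private lemma sum_star_invertible (s : StarOp D K)
    (hdist : ∀ F A B : FractionalIdeal (nonZeroDivisors D) K, F ≠ 0 →
      (F : Submodule D K).FG → A ≠ 0 → B ≠ 0 →
      s.star (F * (s.star A ⊓ s.star B)) = s.star (F * A) ⊓ s.star (F * B))
    {X Y : FractionalIdeal (nonZeroDivisors D) K} (hX : X ≠ 0) (hY : Y ≠ 0)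
    (hfg : ((X + Y : FractionalIdeal (nonZeroDivisors D) K) : Submodule D K).FG)
    (hXi : s.star (X * X⁻¹) = 1) (hYi : s.star (Y * Y⁻¹) = 1) :
    s.star ((X + Y) * (X + Y)⁻¹) = 1 := by
  set Z := X + Y with hZdef
  have hZ : Z ≠ 0 := fi_add_ne_zero_left hX
  set W := s.star X ⊓ s.star Y with hWdef
  have hW : W ≠ 0 := fi_inf_ne_zero (sstar_ne_zero s hX) (sstar_ne_zero s hY)
  set P := X * Y with hPdef
  have hP : P ≠ 0 := fi_mul_ne_zero hX hY
  have hXinv : X⁻¹ ≠ 0 := fi_inv_ne_zero hX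
  have hYinv : Y⁻¹ ≠ 0 := fi_inv_ne_zero hY
  have hPinv : P⁻¹ ≠ 0 := fi_inv_ne_zero hP
  -- step 1: distributivity
  have st1 : s.star (Z * W) = s.star (Z * X) ⊓ s.star (Z * Y) := hdist Z X Y hZ hfg hX hY
  -- step 2: P ≤ both
  have hXZ : X ≤ Z := by rw [hZdef, ← sup_eq_add]; exact le_sup_left
  have hYZ : Y ≤ Z := by rw [hZdef, ← sup_eq_add]; exact le_sup_right
  have st2 : s.star P ≤ s.star (Z * X) ⊓ s.star (Z * Y) := by
    apply le_inf
    · exact s.star_mono hP (by rw [hPdef, mul_comm X Y]; exact mul_le_mul_left hYZ X)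
    · exact s.star_mono hP (mul_le_mul_left hXZ Y)
  -- step 3: Z * W ≤ star P
  have st3 : Z * W ≤ s.star P := by
    rw [hZdef, add_mul]
    apply sup_le
    · calc X * W ≤ X * s.star Y := mul_le_mul_right inf_le_right X
        _ ≤ s.star (X * Y) := mul_star_le s hX hY
    · calc Y * W ≤ Y * s.star X := mul_le_mul_right inf_le_left Y
        _ ≤ s.star (Y * X) := mul_star_le s hY hX
        _ = s.star P := by rw [hPdef, mul_comm]
  have hZW : Z * W ≠ 0 := fi_mul_ne_zero hZ hW
  -- step 5: star (Z * W) = star P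
  have st5 : s.star (Z * W) = s.star P := by
    apply le_antisymm
    · have h := s.star_mono hZW st3
      rwa [s.star_idem hP] at h
    · rw [st1]; exact st2
  -- step 6: P is star-invertible
  have hXXinv : X * X⁻¹ ≠ 0 := fi_mul_ne_zero hX hXinv
  have hYYinv : Y * Y⁻¹ ≠ 0 := fi_mul_ne_zero hY hYinv
  have hsub : X * X⁻¹ * (Y * Y⁻¹) ≤ P * P⁻¹ := by
    have hle1 : X⁻¹ * Y⁻¹ * P ≤ 1 := by
      have : X⁻¹ * Y⁻¹ * P = X * X⁻¹ * (Y * Y⁻¹) := by rw [hPdef]; ring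
      rw [this]
      calc X * X⁻¹ * (Y * Y⁻¹) ≤ 1 * (Y * Y⁻¹) := mul_le_mul_left fi_mul_inv_le_one _
        _ = Y * Y⁻¹ := one_mul _
        _ ≤ 1 := fi_mul_inv_le_one
    have hle2 : X⁻¹ * Y⁻¹ ≤ P⁻¹ := by
      rw [inv_eq]
      exact (le_div_iff_mul_le hP).mpr hle1
    calc X * X⁻¹ * (Y * Y⁻¹) = P * (X⁻¹ * Y⁻¹) := by rw [hPdef]; ring
      _ ≤ P * P⁻¹ := mul_le_mul_right hle2 P
  have st6 : s.star (P * P⁻¹) = 1 := by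
    have h1 : s.star (X * X⁻¹ * (Y * Y⁻¹)) = 1 := by
      rw [← sstar_star_mul s hXXinv hYYinv, hXi, one_mul, hYi]
    have hPPinv : P * P⁻¹ ≠ 0 := by
      intro h0
      apply fi_mul_ne_zero hXXinv hYYinv
      rw [eq_zero_iff]
      intro x hx
      exact (mem_zero_iff _).mp (h0 ▸ hsub hx)
    apply le_antisymm
    · have := s.star_mono hPPinv fi_mul_inv_le_one
      rwa [s.star_one] at this
    · rw [← h1]
      exact s.star_mono (fi_mul_ne_zero hXXinv hYYinv) hsub
  -- step 7
  set T := W * P⁻¹ with hTdef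
  have hT : T ≠ 0 := fi_mul_ne_zero hW hPinv
  have hZT : Z * T ≠ 0 := fi_mul_ne_zero hZ hT
  have st7 : s.star (Z * T) = 1 := by
    rw [hTdef, ← mul_assoc, ← sstar_star_mul s hZW hPinv, st5, sstar_star_mul s hP hPinv, st6]
  -- step 8-10
  have st8 : Z * T ≤ 1 := by
    have := s.le_star hZT
    rwa [st7] at this
  have st9 : T ≤ Z⁻¹ := by
    rw [inv_eq]
    exact (le_div_iff_mul_le hZ).mpr (by rwa [mul_comm])
  have hZZinv : Z * Z⁻¹ ≠ 0 := by
    intro h0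
    apply hZT
    rw [eq_zero_iff]
    intro x hx
    exact (mem_zero_iff _).mp (h0 ▸ (mul_le_mul_right st9 Z) hx)
  apply le_antisymm
  · have := s.star_mono hZZinv fi_mul_inv_le_one
    rwa [s.star_one] at this
  · rw [← st7]
    exact s.star_mono hZT (mul_le_mul_right st9 Z)

private lemma spanSingleton_star_invertible (s : StarOp D K) {a : K} (ha : a ≠ 0) :
    s.star (spanSingleton (nonZeroDivisors D) a * (spanSingleton (nonZeroDivisors D) a)⁻¹) = 1 := by
  rw [spanSingleton_inv, spanSingleton_mul_spanSingleton, mul_inv_cancel₀ ha,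
    spanSingleton_one, s.star_one]

private lemma backward_main (s : StarOp D K)
    (hdist : ∀ F A B : FractionalIdeal (nonZeroDivisors D) K, F ≠ 0 →
      (F : Submodule D K).FG → A ≠ 0 → B ≠ 0 →
      s.star (F * (s.star A ⊓ s.star B)) = s.star (F * A) ⊓ s.star (F * B))
    (S : Finset K) : ∀ F : FractionalIdeal (nonZeroDivisors D) K, F ≠ 0 →
      (F : Submodule D K) = Submodule.span D (S : Set K) → s.star (F * F⁻¹) = 1 := by
  classical
  induction S using Finset.induction_on with
  | empty =>
    intro F hF hspan
    exact absurd (coeToSubmodule_injective (by simpa using hspan)) hF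
  | @insert a S' ha IH =>
    intro F hF hspan
    have hspS : Submodule.span D (S' : Set K) ≤ (F : Submodule D K) := by
      rw [hspan]
      exact Submodule.span_mono (by simp [Finset.coe_insert, Set.subset_insert])
    set X : FractionalIdeal (nonZeroDivisors D) K :=
      ⟨Submodule.span D (S' : Set K), isFractional_of_le hspS⟩ with hXdef
    set Y := spanSingleton (nonZeroDivisors D) a with hYdef
    have hFeq : F = Y + X := by
      apply coeToSubmodule_injective
      show (F : Submodule D K) = ((Y + X : FractionalIdeal (nonZeroDivisors D) K) : Submodule D K)
      rw [coe_add, hspan, hYdef, coe_spanSingleton]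
      show Submodule.span D ((insert a S' : Finset K) : Set K) =
        Submodule.span D {a} ⊔ (X : Submodule D K)
      rw [Finset.coe_insert, Submodule.span_insert]
      rfl
    by_cases hX : X = 0
    · have ha0 : a ≠ 0 := by
        intro h0
        apply hF
        rw [hFeq, hX, hYdef, h0, spanSingleton_zero, add_zero]
      have : F = Y := by rw [hFeq, hX, add_zero]
      rw [this, hYdef]
      exact spanSingleton_star_invertible s ha0
    · by_cases ha0 : a = 0
      · have : F = X := by rw [hFeq, hYdef, ha0, spanSingleton_zero, zero_add]
        exact this ▸ IH X hX rfl
      · have hY0 : Y ≠ 0 := spanSingleton_ne_zero_iff.mpr ha0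
        have hfg : ((Y + X : FractionalIdeal (nonZeroDivisors D) K) : Submodule D K).FG :=
          ⟨insert a S', by rw [← hFeq, hspan]⟩
        rw [hFeq]
        exact sum_star_invertible s hdist hY0 hX hfg
          (spanSingleton_star_invertible s ha0) (IH X hX rfl)

end Aux

/-- `D` is a `∗`-Prüfer domain iff `(F(A^∗ ∩ B^∗))^∗ = (FA)^∗ ∩ (FB)^∗` for all
nonzero finitely generated `F` and nonzero fractional ideals `A`, `B`. -/
theorem starPrufer_iff_distrib (s : StarOp D K) :
    (∀ F : FractionalIdeal (nonZeroDivisors D) K, F ≠ 0 → (F : Submodule D K).FG → s.star (F * F⁻¹) = 1) ↔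
    (∀ F A B : FractionalIdeal (nonZeroDivisors D) K, F ≠ 0 → (F : Submodule D K).FG → A ≠ 0 → B ≠ 0 →
      s.star (F * (s.star A ⊓ s.star B)) = s.star (F * A) ⊓ s.star (F * B)) := by
  constructor
  · -- forward direction
    intro hinv F A B hF hFG hA hB
    have hsA := sstar_ne_zero s hA
    have hsB := sstar_ne_zero s hB
    have hW : s.star A ⊓ s.star B ≠ 0 := fi_inf_ne_zero hsA hsB
    have hFinv : F⁻¹ ≠ 0 := fi_inv_ne_zero hF
    have hFA : F * A ≠ 0 := fi_mul_ne_zero hF hA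
    have hFB : F * B ≠ 0 := fi_mul_ne_zero hF hB
    have hFFinv : F * F⁻¹ ≠ 0 := fi_mul_ne_zero hF hFinv
    apply le_antisymm
    · apply le_inf
      · have h1 : F * (s.star A ⊓ s.star B) ≤ F * s.star A := mul_le_mul_right inf_le_left F
        have h2 := s.star_mono (fi_mul_ne_zero hF hW) (h1.trans (mul_star_le s hF hA))
        rwa [s.star_idem hFA] at h2
      · have h1 : F * (s.star A ⊓ s.star B) ≤ F * s.star B := mul_le_mul_right inf_le_right F
        have h2 := s.star_mono (fi_mul_ne_zero hF hW) (h1.trans (mul_star_le s hF hB))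
        rwa [s.star_idem hFB] at h2
    · intro x hx
      have hx1 : x ∈ s.star (F * A) :=
        (inf_le_left : s.star (F * A) ⊓ s.star (F * B) ≤ s.star (F * A)) hx
      have hx2 : x ∈ s.star (F * B) :=
        (inf_le_right : s.star (F * A) ⊓ s.star (F * B) ≤ s.star (F * B)) hx
      rcases eq_or_ne x 0 with rfl | hx0
      · exact FractionalIdeal.zero_mem _
      have haux : ∀ (C : FractionalIdeal (nonZeroDivisors D) K), C ≠ 0 →
          x ∈ s.star (F * C) →
          spanSingleton (nonZeroDivisors D) x * F⁻¹ ≤ s.star C := by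
        intro C hC hxC
        have hFC : F * C ≠ 0 := fi_mul_ne_zero hF hC
        calc spanSingleton (nonZeroDivisors D) x * F⁻¹
            ≤ s.star (F * C) * F⁻¹ :=
              mul_le_mul_left (spanSingleton_le_iff_mem.mpr hxC) F⁻¹
          _ ≤ s.star (F * C * F⁻¹) := by
              rw [mul_comm (s.star (F * C)) F⁻¹, mul_comm (F * C) F⁻¹]
              exact mul_star_le s hFinv hFC
          _ ≤ s.star C := by
              apply s.star_mono (fi_mul_ne_zero hFC hFinv)
              calc F * C * F⁻¹ = F * F⁻¹ * C := by ring
                _ ≤ 1 * C := mul_le_mul_left fi_mul_inv_le_one C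
                _ = C := one_mul C
      have hxF : spanSingleton (nonZeroDivisors D) x * F⁻¹ ≤ s.star A ⊓ s.star B :=
        le_inf (haux A hA hx1) (haux B hB hx2)
      have h1 : spanSingleton (nonZeroDivisors D) x * (F * F⁻¹) ≤
          F * (s.star A ⊓ s.star B) := by
        calc spanSingleton (nonZeroDivisors D) x * (F * F⁻¹)
            = F * (spanSingleton (nonZeroDivisors D) x * F⁻¹) := by ring
          _ ≤ F * (s.star A ⊓ s.star B) := mul_le_mul_right hxF F
      have h2 := s.star_mono
        (fi_mul_ne_zero (spanSingleton_ne_zero_iff.mpr hx0) hFFinv) h1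
      rw [s.star_smul x hx0 hFFinv, hinv F hF hFG, mul_one] at h2
      exact spanSingleton_le_iff_mem.mp h2
  · -- backward direction
    intro hdist F hF hFG
    obtain ⟨S, hS⟩ := hFG
    exact backward_main s hdist S F hF hS.symm
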